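/- Let L_k = 4^{n(k²+k)} and λ_k(x) = 1 + (1/2)cos(⟨x, w^k⟩) with |w^k| ≤ 2·4^{n(k²+k)}, so each λ_k : ℝⁿ → [1/2, 3/2] is Lipschitz with constant L_k. Then for Λ_m = ∏_{k=1}^m λ_k and any x, x' ∈ ℝⁿ with 3L_m|x−x'| < 1, one has 1 − 3L_m|x−x'| ≤ Λ_m(x')/Λ_m(x) ≤ (1 − 3L_m|x−x'|)^{−1}. -/

import Mathlib

open Finset

private lemma cos_lip (a b : ℝ) : |Real.cos a - Real.cos b| ≤ |a - b| := by
  rw [Real.cos_sub_cos, abs_mul, abs_mul]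
  have h1 := Real.abs_sin_le_one ((a + b) / 2)
  have h2 : |Real.sin ((a - b) / 2)| ≤ |a - b| / 2 := by
    have := Real.abs_sin_le_abs (x := (a - b) / 2)
    rwa [abs_div, abs_of_nonneg (by norm_num : (0:ℝ) ≤ 2)] at this
  have h3 : |(-2 : ℝ)| = 2 := by norm_num
  have h4 : (0:ℝ) ≤ |Real.sin ((a - b) / 2)| := abs_nonneg _
  have h5 : (0:ℝ) ≤ |Real.sin ((a + b) / 2)| := abs_nonneg _
  rw [h3]
  nlinarith

private lemma one_sub_sum_le_prod_one_sub (s : Finset ℕ) (a : ℕ → ℝ)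
    (h0 : ∀ k ∈ s, 0 ≤ a k) (h1 : ∀ k ∈ s, a k ≤ 1) :
    1 - ∑ k ∈ s, a k ≤ ∏ k ∈ s, (1 - a k) := by
  induction s using Finset.induction with
  | empty => simp
  | @insert i s hi ih =>
    rw [Finset.sum_insert hi, Finset.prod_insert hi]
    have h0' : ∀ k ∈ s, 0 ≤ a k := fun k hk => h0 k (Finset.mem_insert_of_mem hk)
    have h1' : ∀ k ∈ s, a k ≤ 1 := fun k hk => h1 k (Finset.mem_insert_of_mem hk)
    have ih' := ih h0' h1'
    have hai0 : 0 ≤ a i := h0 i (Finset.mem_insert_self i s)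
    have hai1 : a i ≤ 1 := h1 i (Finset.mem_insert_self i s)
    have hsum : 0 ≤ ∑ k ∈ s, a k := Finset.sum_nonneg h0'
    nlinarith [mul_le_mul_of_nonneg_left ih' (by linarith : (0:ℝ) ≤ 1 - a i)]

private lemma sum_L_le (n : ℕ) (hn : 1 ≤ n) (m : ℕ) :
    ∑ k ∈ Finset.Icc 1 m, (4:ℝ) ^ (n * (k ^ 2 + k)) ≤
      (3/2) * (4:ℝ) ^ (n * (m ^ 2 + m)) := by
  induction m with
  | zero => norm_num
  | succ m ih =>
    rw [Finset.sum_Icc_succ_top (by omega : 1 ≤ m + 1)]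
    have key : 3 * (4:ℝ) ^ (n * (m ^ 2 + m)) ≤ (4:ℝ) ^ (n * ((m+1) ^ 2 + (m+1))) := by
      have hexp : n * ((m+1)^2 + (m+1)) = n * (m^2 + m) + n * (2*m + 2) := by ring
      rw [hexp, pow_add]
      have h16 : (16:ℝ) ≤ (4:ℝ) ^ (n * (2*m+2)) := by
        calc (16:ℝ) = 4 ^ 2 := by norm_num
        _ ≤ (4:ℝ) ^ (n * (2*m+2)) := by
            apply pow_le_pow_right₀ (by norm_num)
            nlinarith
      nlinarith [pow_pos (by norm_num : (0:ℝ) < 4) (n * (m^2+m))]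
    linarith

theorem stmt17 (n m : ℕ) (hn : 1 ≤ n) (hm : 1 ≤ m)
    (w : ℕ → EuclideanSpace ℝ (Fin n))
    (hw : ∀ k, ‖w k‖ ≤ 2 * 4 ^ (n * (k ^ 2 + k)))
    (x x' : EuclideanSpace ℝ (Fin n))
    (h : 3 * (4 : ℝ) ^ (n * (m ^ 2 + m)) * ‖x - x'‖ < 1) :
    1 - 3 * (4 : ℝ) ^ (n * (m ^ 2 + m)) * ‖x - x'‖ ≤
      (∏ k ∈ Finset.Icc 1 m, (1 + (1 / 2) * Real.cos (inner ℝ x' (w k) : ℝ))) /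
        (∏ k ∈ Finset.Icc 1 m, (1 + (1 / 2) * Real.cos (inner ℝ x (w k) : ℝ))) ∧
    (∏ k ∈ Finset.Icc 1 m, (1 + (1 / 2) * Real.cos (inner ℝ x' (w k) : ℝ))) /
        (∏ k ∈ Finset.Icc 1 m, (1 + (1 / 2) * Real.cos (inner ℝ x (w k) : ℝ))) ≤
      (1 - 3 * (4 : ℝ) ^ (n * (m ^ 2 + m)) * ‖x - x'‖)⁻¹ := by
  obtain ⟨d, hd⟩ : ∃ d : ℝ, d = ‖x - x'‖ := ⟨_, rfl⟩
  obtain ⟨L, hL⟩ : ∃ L : ℕ → ℝ, L = fun k => (4:ℝ) ^ (n * (k ^ 2 + k)) := ⟨_, rfl⟩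
  obtain ⟨lam, hlam⟩ : ∃ lam : EuclideanSpace ℝ (Fin n) → ℕ → ℝ,
      lam = fun y k => 1 + (1/2) * Real.cos (inner ℝ y (w k) : ℝ) := ⟨_, rfl⟩
  have hscal : 3 * (4 : ℝ) ^ (n * (m ^ 2 + m)) * ‖x - x'‖ = 3 * L m * d := by
    rw [hL, hd]
  have hprx : (∏ k ∈ Finset.Icc 1 m, (1 + (1 / 2) * Real.cos (inner ℝ x (w k) : ℝ))) =
      ∏ k ∈ Finset.Icc 1 m, lam x k := by rw [hlam]
  have hprx' : (∏ k ∈ Finset.Icc 1 m, (1 + (1 / 2) * Real.cos (inner ℝ x' (w k) : ℝ))) =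
      ∏ k ∈ Finset.Icc 1 m, lam x' k := by rw [hlam]
  rw [hscal] at h
  rw [hscal, hprx, hprx']
  have hdnn : 0 ≤ d := hd ▸ norm_nonneg _
  have hLpos : ∀ k, 0 < L k := fun k => hL ▸ pow_pos (by norm_num) _
  have hLmono : ∀ k, k ≤ m → L k ≤ L m := by
    intro k hk
    rw [hL]
    apply pow_le_pow_right₀ (by norm_num)
    exact Nat.mul_le_mul_left n (by nlinarith)
  have hLmd : L m * d < 1/3 := by
    have : 3 * L m * d < 1 := h
    linarith
  have hlb : ∀ y k, (1/2 : ℝ) ≤ lam y k := by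
    intro y k
    have := Real.neg_one_le_cos (inner ℝ y (w k) : ℝ)
    simp only [hlam]
    linarith
  have hlb0 : ∀ y k, (0 : ℝ) ≤ lam y k := fun y k => le_trans (by norm_num) (hlb y k)
  have hdiff : ∀ (y y' : EuclideanSpace ℝ (Fin n)) k,
      |lam y' k - lam y k| ≤ L k * ‖y - y'‖ := by
    intro y y' k
    subst hlam
    have h1 : (1 + (1/2) * Real.cos (inner ℝ y' (w k) : ℝ)) -
        (1 + (1/2) * Real.cos (inner ℝ y (w k) : ℝ)) =
        (1/2) * (Real.cos (inner ℝ y' (w k) : ℝ) - Real.cos (inner ℝ y (w k) : ℝ)) := by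
      ring
    rw [h1, abs_mul]
    have hcos := cos_lip (inner ℝ y' (w k) : ℝ) (inner ℝ y (w k) : ℝ)
    have hinner : |(inner ℝ y' (w k) : ℝ) - (inner ℝ y (w k) : ℝ)| ≤ ‖y - y'‖ * ‖w k‖ := by
      rw [← inner_sub_left]
      calc |(inner ℝ (y' - y) (w k) : ℝ)| ≤ ‖y' - y‖ * ‖w k‖ := abs_real_inner_le_norm _ _
      _ = ‖y - y'‖ * ‖w k‖ := by rw [norm_sub_rev]
    have hwk : ‖w k‖ ≤ 2 * L k := by simpa [hL] using hw k
    have hynn : (0:ℝ) ≤ ‖y - y'‖ := norm_nonneg _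
    calc |(1/2:ℝ)| * |Real.cos (inner ℝ y' (w k) : ℝ) - Real.cos (inner ℝ y (w k) : ℝ)|
        ≤ (1/2) * (‖y - y'‖ * ‖w k‖) := by
          rw [abs_of_nonneg (by norm_num : (0:ℝ) ≤ (1/2:ℝ))]
          exact mul_le_mul_of_nonneg_left (hcos.trans hinner) (by norm_num)
      _ ≤ (1/2) * (‖y - y'‖ * (2 * L k)) := by
          apply mul_le_mul_of_nonneg_left _ (by norm_num)
          exact mul_le_mul_of_nonneg_left hwk hynn
      _ = L k * ‖y - y'‖ := by ring
  have main : ∀ (y y' : EuclideanSpace ℝ (Fin n)), ‖y - y'‖ = d →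
      (1 - 3 * L m * d) * ∏ k ∈ Finset.Icc 1 m, lam y k ≤
        ∏ k ∈ Finset.Icc 1 m, lam y' k := by
    intro y y' hdd
    have hak1 : ∀ k ∈ Finset.Icc 1 m, 2 * L k * d ≤ 1 := by
      intro k hk
      have hkm : k ≤ m := (Finset.mem_Icc.mp hk).2
      have := mul_le_mul_of_nonneg_right (hLmono k hkm) hdnn
      linarith
    have step1 : ∏ k ∈ Finset.Icc 1 m, (1 - 2 * L k * d) * lam y k ≤
        ∏ k ∈ Finset.Icc 1 m, lam y' k := by
      apply Finset.prod_le_prod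
      · intro k hk
        have h1 : (0:ℝ) ≤ 1 - 2 * L k * d := by linarith [hak1 k hk]
        exact mul_nonneg h1 (hlb0 y k)
      · intro k hk
        have habs := hdiff y y' k
        rw [hdd] at habs
        have h2 : lam y k - L k * d ≤ lam y' k := by
          have := (abs_le.mp habs).1
          linarith
        have h3 : L k * d ≤ 2 * L k * d * lam y k := by
          have h4 := hlb y k
          have h6 : (0:ℝ) ≤ L k * d := mul_nonneg (hLpos k).le hdnn
          calc L k * d ≤ (2 * lam y k) * (L k * d) :=
                le_mul_of_one_le_left h6 (by linarith)
            _ = 2 * L k * d * lam y k := by ring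
        nlinarith
    have step2 : (1 - ∑ k ∈ Finset.Icc 1 m, 2 * L k * d) *
          ∏ k ∈ Finset.Icc 1 m, lam y k ≤
        ∏ k ∈ Finset.Icc 1 m, (1 - 2 * L k * d) * lam y k := by
      rw [Finset.prod_mul_distrib]
      apply mul_le_mul_of_nonneg_right _ (Finset.prod_nonneg (fun k _ => hlb0 y k))
      apply one_sub_sum_le_prod_one_sub
      · intro k hk
        exact mul_nonneg (mul_nonneg (by linarith [(hLpos k).le]) (hLpos k).le) hdnn
      · exact hak1
    have step3 : (1 - 3 * L m * d) ≤ (1 - ∑ k ∈ Finset.Icc 1 m, 2 * L k * d) := by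
      have hsum : ∑ k ∈ Finset.Icc 1 m, 2 * L k * d =
          2 * d * ∑ k ∈ Finset.Icc 1 m, L k := by
        rw [Finset.mul_sum]; apply Finset.sum_congr rfl; intro k _; ring
      have hS := sum_L_le n hn m
      rw [hsum]
      simp only [hL]
      nlinarith [hS, hdnn, pow_pos (by norm_num : (0:ℝ) < 4) (n * (m^2+m))]
    have hprodnn : 0 ≤ ∏ k ∈ Finset.Icc 1 m, lam y k :=
      Finset.prod_nonneg (fun k _ => hlb0 y k)
    calc (1 - 3 * L m * d) * ∏ k ∈ Finset.Icc 1 m, lam y k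
        ≤ (1 - ∑ k ∈ Finset.Icc 1 m, 2 * L k * d) * ∏ k ∈ Finset.Icc 1 m, lam y k :=
          mul_le_mul_of_nonneg_right step3 hprodnn
      _ ≤ _ := step2.trans step1
  have hxpos : 0 < ∏ k ∈ Finset.Icc 1 m, lam x k :=
    Finset.prod_pos (fun k _ => lt_of_lt_of_le (by norm_num) (hlb x k))
  have hx'pos : 0 < ∏ k ∈ Finset.Icc 1 m, lam x' k :=
    Finset.prod_pos (fun k _ => lt_of_lt_of_le (by norm_num) (hlb x' k))
  have h1m := main x x' hd.symm
  have h2m := main x' x (by rw [norm_sub_rev]; exact hd.symm)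
  have hΔpos : 0 < 1 - 3 * L m * d := by
    have : 3 * L m * d < 1 := h
    linarith
  have hgoal1 : 1 - 3 * L m * d ≤
      (∏ k ∈ Finset.Icc 1 m, lam x' k) / ∏ k ∈ Finset.Icc 1 m, lam x k := by
    rw [le_div_iff₀ hxpos]; exact h1m
  have hgoal2 : (∏ k ∈ Finset.Icc 1 m, lam x' k) / ∏ k ∈ Finset.Icc 1 m, lam x k ≤
      (1 - 3 * L m * d)⁻¹ := by
    rw [div_le_iff₀ hxpos, ← div_eq_inv_mul, le_div_iff₀ hΔpos]
    linarith
  exact ⟨hgoal1, hgoal2⟩
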